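/- For all real x, y and all nonnegative integers n, m, the 6-term recurrence (n+1)·L_{n+1,m+1}(x,y) = 2(n+1)·L_{n+1,m}(x,y) + (2n+1-x)·L_{n,m+1}(x,y) - (n+1)·L_{n+1,m-1}(x,y) - (2n+1-x+y)·L_{n,m}(x,y) - n·L_{n-1,m+1}(x,y) holds, where L_{a,b}(x,y) := 0 whenever a < 0 or b < 0. -/

import Mathlib

noncomputable def L2 (n m : ℕ) (x y : ℝ) : ℝ :=
  ∑ i ∈ Finset.range (m+1), ∑ s ∈ Finset.range (n+1),
    ((-1:ℝ)^(i+s) / ((Nat.factorial i) * (Nat.factorial s))) *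
      ((m+n).choose (m-i)) * ((n+i).choose (n-s)) * x^s * y^i

noncomputable def L2Z (n m : ℤ) (x y : ℝ) : ℝ :=
  if n < 0 ∨ m < 0 then 0 else L2 n.toNat m.toNat x y


noncomputable def cc (n m i s : ℕ) : ℝ :=
  (-1:ℝ)^(i+s) / ((Nat.factorial i) * (Nat.factorial s)) *
    ((m+n).choose (n+i)) * ((n+i).choose (i+s))

noncomputable def DS (M N : ℕ) (c : ℕ → ℕ → ℝ) (x y : ℝ) : ℝ :=
  ∑ i ∈ Finset.range M, ∑ s ∈ Finset.range N, c i s * x^s * y^i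

lemma cc_formula (n m i s : ℕ) (h1 : i ≤ m) (h2 : s ≤ n) :
    cc n m i s = (-1:ℝ)^(i+s) / ((Nat.factorial i) * (Nat.factorial s)) *
      ((m+n).choose (m-i)) * ((n+i).choose (n-s)) := by
  unfold cc
  rw [show m-i = (m+n)-(n+i) by omega, Nat.choose_symm (show n+i ≤ m+n by omega),
      show n-s = (n+i)-(i+s) by omega, Nat.choose_symm (show i+s ≤ n+i by omega)]

lemma cc_zero_left (n m i s : ℕ) (h : m < i) : cc n m i s = 0 := by
  unfold cc
  rw [Nat.choose_eq_zero_of_lt (show m+n < n+i by omega)]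
  simp

lemma cc_zero_right (n m i s : ℕ) (h : n < s) : cc n m i s = 0 := by
  unfold cc
  rw [Nat.choose_eq_zero_of_lt (show n+i < i+s by omega)]
  simp

lemma L2_eq (x y : ℝ) (n m M N : ℕ) (hM : m+1 ≤ M) (hN : n+1 ≤ N) :
    L2 n m x y = DS M N (cc n m) x y := by
  unfold L2 DS
  calc (∑ i ∈ Finset.range (m+1), ∑ s ∈ Finset.range (n+1),
        ((-1:ℝ)^(i+s) / ((Nat.factorial i) * (Nat.factorial s))) *
          ((m+n).choose (m-i)) * ((n+i).choose (n-s)) * x^s * y^i)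
      = ∑ i ∈ Finset.range (m+1), ∑ s ∈ Finset.range N, cc n m i s * x^s * y^i := by
        refine Finset.sum_congr rfl fun i hi => ?_
        have him : i ≤ m := Nat.lt_succ_iff.mp (Finset.mem_range.mp hi)
        refine (Finset.sum_congr rfl fun s hs => ?_).trans
          (Finset.sum_subset (Finset.range_subset_range.mpr hN) fun s _ hs => ?_)
        · rw [cc_formula n m i s him (Nat.lt_succ_iff.mp (Finset.mem_range.mp hs))]
        · have hns : n < s := by simp [Finset.mem_range] at hs; omega
          rw [cc_zero_right n m i s hns]
          ring
    _ = ∑ i ∈ Finset.range M, ∑ s ∈ Finset.range N, cc n m i s * x^s * y^i := by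
        refine Finset.sum_subset (Finset.range_subset_range.mpr hM) fun i _ hi => ?_
        have hmi : m < i := by simp [Finset.mem_range] at hi; omega
        refine Finset.sum_eq_zero fun s _ => ?_
        rw [cc_zero_left n m i s hmi]
        ring

lemma DS_shiftx (M N : ℕ) (c : ℕ → ℕ → ℝ) (x y : ℝ) (hc : ∀ i, c i N = 0) :
    x * DS M (N+1) c x y = DS M (N+1) (fun i s => if s = 0 then 0 else c i (s-1)) x y := by
  unfold DS
  rw [Finset.mul_sum]
  refine Finset.sum_congr rfl fun i _ => ?_
  rw [Finset.mul_sum]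
  rw [Finset.sum_range_succ (fun s => x * (c i s * x^s * y^i)) N, hc i]
  rw [Finset.sum_range_succ' (fun s => (if s = 0 then (0:ℝ) else c i (s-1)) * x^s * y^i) N]
  simp only [Nat.succ_ne_zero, if_neg, Nat.add_sub_cancel, if_pos, ite_true, ite_false,
    reduceIte, mul_zero, zero_mul, add_zero, Nat.add_eq_zero, and_false, false_and]
  refine Finset.sum_congr rfl fun s _ => by ring

lemma DS_shifty (M N : ℕ) (c : ℕ → ℕ → ℝ) (x y : ℝ) (hc : ∀ s, c M s = 0) :
    y * DS (M+1) N c x y = DS (M+1) N (fun i s => if i = 0 then 0 else c (i-1) s) x y := by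
  unfold DS
  rw [Finset.mul_sum]
  rw [Finset.sum_range_succ (fun i => y * ∑ s ∈ Finset.range N, c i s * x^s * y^i) M]
  rw [Finset.sum_range_succ' (fun i => ∑ s ∈ Finset.range N,
        (if i = 0 then (0:ℝ) else c (i-1) s) * x^s * y^i) M]
  simp only [hc, Nat.succ_ne_zero, if_neg, Nat.add_sub_cancel, ite_true, ite_false, reduceIte,
    mul_zero, zero_mul, add_zero, Finset.sum_const_zero, Nat.add_eq_zero, and_false, false_and]
  refine Finset.sum_congr rfl fun i _ => ?_
  rw [Finset.mul_sum]
  refine Finset.sum_congr rfl fun s _ => by ring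


lemma absR (w t : ℕ) : ((w:ℝ)+1-(t:ℝ)) * ((w+1).choose t) = ((w:ℝ)+1) * (w.choose t) := by
  rcases le_or_gt t (w+1) with h | h
  · have := congrArg (Nat.cast (R := ℝ)) (Nat.choose_mul_succ_eq w t)
    push_cast [Nat.cast_sub h] at this
    linarith [this]
  · rw [Nat.choose_eq_zero_of_lt h, Nat.choose_eq_zero_of_lt (by omega)]
    simp

lemma key (n m i s : ℕ) :
    ((n:ℝ)+1) * ((m+n+2).choose (n+i+1)) * ((n+i+1).choose (i+s))
    = 2*((n:ℝ)+1) * ((m+n+1).choose (n+i+1)) * ((n+i+1).choose (i+s))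
    + (2*(n:ℝ)+1) * ((m+n+1).choose (n+i)) * ((n+i).choose (i+s))
    + (s:ℝ) * ((m+n+1).choose (n+i)) * ((n+i).choose (i+s-1))
    - ((n:ℝ)+1) * ((m+n).choose (n+i+1)) * ((n+i+1).choose (i+s))
    - (2*(n:ℝ)+1) * ((m+n).choose (n+i)) * ((n+i).choose (i+s))
    - (s:ℝ) * ((m+n).choose (n+i)) * ((n+i).choose (i+s-1))
    + (i:ℝ) * ((m+n).choose (n+i-1)) * ((n+i-1).choose (i+s-1))
    - (n:ℝ) * ((m+n).choose (n+i-1)) * ((n+i-1).choose (i+s)) := by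
  rcases i with _ | i'
  · -- i = 0
    rcases n with _ | n'
    · -- n = 0 : degenerate
      simp only [Nat.add_zero, Nat.zero_add, Nat.cast_zero, Nat.cast_ofNat]
      norm_num
      push_cast
      ring
    · -- n = n'+1
      rcases s with _ | s'
      · -- s = 0
        simp only [Nat.add_zero, Nat.zero_add, Nat.cast_zero]
        rw [show (n'+1+0) = n'+1 by omega]
        rw [show m+(n'+1)+2 = (m+n'+2)+1 by omega, show m+(n'+1)+1 = (m+n'+1)+1 by omega,
            show m+(n'+1) = (m+n')+1 by omega, show n'+1+1 = (n'+1)+1 by omega]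
        simp only [Nat.choose_succ_succ]
        rw [show (n'+1) - 1 = n' by omega]
        simp only [Nat.choose_zero_right]
        push_cast
        ring
      · -- s = s'+1
        rw [show (0:ℕ)+(s'+1) = s'+1 by omega, show (s'+1)-1 = s' by omega,
            show n'+1+0 = n'+1 by omega, show (n'+1)-1 = n' by omega]
        rw [show m+(n'+1)+2 = (m+n'+2)+1 by omega, show m+(n'+1)+1 = (m+n'+1)+1 by omega,
            show m+(n'+1) = (m+n')+1 by omega, show n'+1+1 = (n'+1)+1 by omega,
            show s'+1 = s'+1 by omega]
        simp only [Nat.choose_succ_succ]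
        push_cast
        have habs := absR n' s'
        push_cast at habs
        linear_combination (((m+n'+1).choose n' : ℝ)) * habs
  · -- i = i'+1
    rw [show n+(i'+1) = (n+i')+1 by omega, show (n+i')+1-1 = n+i' by omega,
        show i'+1+s = (i'+s)+1 by omega, show (i'+s)+1-1 = i'+s by omega]
    rw [show m+n+2 = (m+n+1)+1 by omega]
    simp only [Nat.choose_succ_succ]
    push_cast
    have habs := absR (n+i') (i'+s)
    push_cast at habs
    linear_combination (((m+n).choose (n+i') : ℝ)) * habs


lemma br_s (n m i s : ℕ) : (if s = 0 then (0:ℝ) else cc n m i (s-1))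
    = -(s:ℝ) * ((-1:ℝ)^(i+s) / ((Nat.factorial i) * (Nat.factorial s)) *
        ((m+n).choose (n+i)) * ((n+i).choose (i+s-1))) := by
  rcases s with _ | s'
  · simp
  · rw [if_neg (Nat.succ_ne_zero s')]
    rw [show (s'+1)-1 = s' by omega, show i+(s'+1) = (i+s')+1 by omega,
        show (i+s')+1-1 = i+s' by omega]
    rw [pow_succ, Nat.factorial_succ]
    have h1 : ((Nat.factorial i : ℝ)) ≠ 0 := Nat.cast_ne_zero.mpr (Nat.factorial_ne_zero i)
    have h2 : ((Nat.factorial s' : ℝ)) ≠ 0 := Nat.cast_ne_zero.mpr (Nat.factorial_ne_zero s')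
    have h3 : ((s':ℝ)+1) ≠ 0 := by positivity
    unfold cc
    push_cast
    field_simp

lemma br_i (n m i s : ℕ) : (if i = 0 then (0:ℝ) else cc n m (i-1) s)
    = -(i:ℝ) * ((-1:ℝ)^(i+s) / ((Nat.factorial i) * (Nat.factorial s)) *
        ((m+n).choose (n+i-1)) * ((n+i-1).choose (i+s-1))) := by
  rcases i with _ | i'
  · simp
  · rw [if_neg (Nat.succ_ne_zero i')]
    rw [show n+(i'+1)-1 = n+i' by omega, show i'+1+s = (i'+s)+1 by omega,
        show (i'+s)+1-1 = i'+s by omega]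
    rw [pow_succ, Nat.factorial_succ]
    have h1 : ((Nat.factorial i' : ℝ)) ≠ 0 := Nat.cast_ne_zero.mpr (Nat.factorial_ne_zero i')
    have h2 : ((Nat.factorial s : ℝ)) ≠ 0 := Nat.cast_ne_zero.mpr (Nat.factorial_ne_zero s)
    have h3 : ((i':ℝ)+1) ≠ 0 := by positivity
    unfold cc
    push_cast
    field_simp

lemma br_m (n m i s : ℕ) : (if m = 0 then (0:ℝ) else cc (n+1) (m-1) i s)
    = (-1:ℝ)^(i+s) / ((Nat.factorial i) * (Nat.factorial s)) *
        ((m+n).choose (n+i+1)) * ((n+i+1).choose (i+s)) := by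
  rcases m with _ | m'
  · rw [if_pos rfl, Nat.choose_eq_zero_of_lt (show 0+n < n+i+1 by omega)]
    simp
  · rw [if_neg (Nat.succ_ne_zero m')]
    unfold cc
    rw [show m'+1-1+(n+1) = m'+1+n by omega, show n+1+i = n+i+1 by omega]

lemma br_n (n m i s : ℕ) : (n:ℝ) * (if n = 0 then (0:ℝ) else cc (n-1) (m+1) i s)
    = (n:ℝ) * ((-1:ℝ)^(i+s) / ((Nat.factorial i) * (Nat.factorial s)) *
        ((m+n).choose (n+i-1)) * ((n+i-1).choose (i+s))) := by
  rcases n with _ | n'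
  · simp
  · rw [if_neg (Nat.succ_ne_zero n')]
    unfold cc
    rw [show m+1+(n'+1-1) = m+(n'+1) by omega, show n'+1-1+i = n'+1+i-1 by omega]

lemma keyC (n m i s : ℕ) :
    ((n:ℝ)+1) * cc (n+1) (m+1) i s
    = 2*((n:ℝ)+1) * cc (n+1) m i s
    + (2*(n:ℝ)+1) * cc n (m+1) i s
    - (if s = 0 then (0:ℝ) else cc n (m+1) i (s-1))
    - ((n:ℝ)+1) * (if m = 0 then (0:ℝ) else cc (n+1) (m-1) i s)
    - (2*(n:ℝ)+1) * cc n m i s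
    + (if s = 0 then (0:ℝ) else cc n m i (s-1))
    - (if i = 0 then (0:ℝ) else cc n m (i-1) s)
    - (n:ℝ) * (if n = 0 then (0:ℝ) else cc (n-1) (m+1) i s) := by
  rw [br_s n (m+1) i s, br_s n m i s, br_i n m i s, br_m n m i s, br_n n m i s]
  unfold cc
  rw [show (m+1)+(n+1) = m+n+2 by omega, show m+(n+1) = m+n+1 by omega,
      show (m+1)+n = m+n+1 by omega, show (n+1)+i = n+i+1 by omega]
  linear_combination ((-1:ℝ)^(i+s) / ((Nat.factorial i : ℝ) * (Nat.factorial s : ℝ))) * key n m i s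

lemma L2Z_natCast (a b : ℕ) (x y : ℝ) : L2Z (a:ℤ) (b:ℤ) x y = L2 a b x y := by
  simp [L2Z]

theorem stmt5 (x y : ℝ) (n m : ℕ) :
    ((n:ℝ)+1) * L2Z (n+1) (m+1) x y =
      2*((n:ℝ)+1) * L2Z (n+1) m x y + (2*(n:ℝ)+1-x) * L2Z n (m+1) x y
      - ((n:ℝ)+1) * L2Z (n+1) ((m:ℤ)-1) x y
      - (2*(n:ℝ)+1-x+y) * L2Z n m x y - (n:ℝ) * L2Z ((n:ℤ)-1) (m+1) x y := by
  have hn1 : ((n:ℤ)+1) = ((n+1:ℕ):ℤ) := by push_cast; ring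
  have hm1 : ((m:ℤ)+1) = ((m+1:ℕ):ℤ) := by push_cast; ring
  have h0 : L2Z ((n:ℤ)+1) ((m:ℤ)+1) x y = DS (m+2) (n+2) (cc (n+1) (m+1)) x y := by
    rw [hn1, hm1, L2Z_natCast]
    exact L2_eq x y (n+1) (m+1) (m+2) (n+2) (by omega) (by omega)
  have h1 : L2Z ((n:ℤ)+1) (m:ℤ) x y = DS (m+2) (n+2) (cc (n+1) m) x y := by
    rw [hn1, L2Z_natCast]
    exact L2_eq x y (n+1) m (m+2) (n+2) (by omega) (by omega)
  have h2 : L2Z (n:ℤ) ((m:ℤ)+1) x y = DS (m+2) (n+2) (cc n (m+1)) x y := by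
    rw [hm1, L2Z_natCast]
    exact L2_eq x y n (m+1) (m+2) (n+2) (by omega) (by omega)
  have h5 : L2Z (n:ℤ) (m:ℤ) x y = DS (m+2) (n+2) (cc n m) x y := by
    rw [L2Z_natCast]
    exact L2_eq x y n m (m+2) (n+2) (by omega) (by omega)
  have h4 : L2Z ((n:ℤ)+1) ((m:ℤ)-1) x y
      = DS (m+2) (n+2) (fun i s => if m = 0 then 0 else cc (n+1) (m-1) i s) x y := by
    rcases m with _ | m'
    · rw [L2Z, if_pos (Or.inr (by norm_num))]
      symm
      unfold DS
      refine Finset.sum_eq_zero fun i _ => Finset.sum_eq_zero fun s _ => by simp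
    · rw [show ((m'+1:ℕ):ℤ)-1 = ((m':ℕ):ℤ) by push_cast; ring, hn1, L2Z_natCast,
          L2_eq x y (n+1) m' (m'+1+2) (n+2) (by omega) (by omega)]
      unfold DS
      refine Finset.sum_congr rfl fun i _ => Finset.sum_congr rfl fun s _ => ?_
      simp
  have h8 : L2Z ((n:ℤ)-1) ((m:ℤ)+1) x y
      = DS (m+2) (n+2) (fun i s => if n = 0 then 0 else cc (n-1) (m+1) i s) x y := by
    rcases n with _ | n'
    · rw [L2Z, if_pos (Or.inl (by norm_num))]
      symm
      unfold DS
      refine Finset.sum_eq_zero fun i _ => Finset.sum_eq_zero fun s _ => by simp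
    · rw [show ((n'+1:ℕ):ℤ)-1 = ((n':ℕ):ℤ) by push_cast; ring, hm1, L2Z_natCast,
          L2_eq x y n' (m+1) (m+2) (n'+1+2) (by omega) (by omega)]
      unfold DS
      refine Finset.sum_congr rfl fun i _ => Finset.sum_congr rfl fun s _ => ?_
      simp
  have hx2 : x * DS (m+2) (n+2) (cc n (m+1)) x y
      = DS (m+2) (n+2) (fun i s => if s = 0 then 0 else cc n (m+1) i (s-1)) x y := by
    have := DS_shiftx (m+2) (n+1) (cc n (m+1)) x y
      (fun i => cc_zero_right n (m+1) i (n+1) (by omega))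
    simpa using this
  have hx5 : x * DS (m+2) (n+2) (cc n m) x y
      = DS (m+2) (n+2) (fun i s => if s = 0 then 0 else cc n m i (s-1)) x y := by
    have := DS_shiftx (m+2) (n+1) (cc n m) x y
      (fun i => cc_zero_right n m i (n+1) (by omega))
    simpa using this
  have hy5 : y * DS (m+2) (n+2) (cc n m) x y
      = DS (m+2) (n+2) (fun i s => if i = 0 then 0 else cc n m (i-1) s) x y := by
    have := DS_shifty (m+1) (n+2) (cc n m) x y
      (fun s => cc_zero_left n m (m+1) s (by omega))
    simpa using this
  have hbig : ((n:ℝ)+1) * DS (m+2) (n+2) (cc (n+1) (m+1)) x y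
      = 2*((n:ℝ)+1) * DS (m+2) (n+2) (cc (n+1) m) x y
      + (2*(n:ℝ)+1) * DS (m+2) (n+2) (cc n (m+1)) x y
      - DS (m+2) (n+2) (fun i s => if s = 0 then 0 else cc n (m+1) i (s-1)) x y
      - ((n:ℝ)+1) * DS (m+2) (n+2) (fun i s => if m = 0 then 0 else cc (n+1) (m-1) i s) x y
      - (2*(n:ℝ)+1) * DS (m+2) (n+2) (cc n m) x y
      + DS (m+2) (n+2) (fun i s => if s = 0 then 0 else cc n m i (s-1)) x y
      - DS (m+2) (n+2) (fun i s => if i = 0 then 0 else cc n m (i-1) s) x y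
      - (n:ℝ) * DS (m+2) (n+2) (fun i s => if n = 0 then 0 else cc (n-1) (m+1) i s) x y := by
    unfold DS
    rw [← sub_eq_zero]
    simp only [Finset.mul_sum, ← Finset.sum_sub_distrib, ← Finset.sum_add_distrib]
    refine Finset.sum_eq_zero fun i _ => Finset.sum_eq_zero fun s _ => ?_
    linear_combination (x^s * y^i) * keyC n m i s
  linear_combination ((n:ℝ)+1) * h0 - 2*((n:ℝ)+1) * h1 - (2*(n:ℝ)+1-x) * h2
    + ((n:ℝ)+1) * h4 + (2*(n:ℝ)+1-x+y) * h5 + (n:ℝ) * h8 + hx2 - hx5 + hy5 + hbig
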